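/- For every n ≥ 0 and every P ∈ D_n^{h,≥}, the number of occurrences of the factor DU in P equals the total number of occurrences of the factors FF, FU, DF and DU in φ(P). -/
import Mathlib


inductive Step : Type
  | U | D | F
  deriving DecidableEq, Repr

open Step

/-- Number of occurrences of `p` as a factor (consecutive steps) of `w`. -/
def countFactor (p w : List Step) : ℕ :=
  w.tails.countP fun t => p.isPrefixOf t

/-- `w` is a Dyck path (word over {U,D} with as many U's as D's,
every prefix having at least as many U's as D's). -/
def IsDyck (w : List Step) : Prop :=
  w.count F = 0 ∧ w.count U = w.count D ∧
    ∀ p : List Step, p <+: w → p.count D ≤ p.count U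

/-- `w` is a Motzkin path. -/
def IsMotzkin (w : List Step) : Prop :=
  w.count U = w.count D ∧ ∀ p : List Step, p <+: w → p.count D ≤ p.count U

/-- The (maximal) height of a path. -/
def height (w : List Step) : ℕ :=
  (w.inits.map fun p => p.count U - p.count D).foldr max 0

/-- The set `D^{h,≥}` of Dyck paths with first return decomposition
`P = U α D β` satisfying `h(UαD) ≥ h(β)`, recursively. -/
inductive DH : List Step → Prop
  | nil : DH []
  | cons (α β : List Step) : DH α → DH β →
      height (U :: (α ++ [D])) ≥ height β → DH (U :: (α ++ [D] ++ β))

/-- The map φ from `D^{h,≥}` to Motzkin paths, as a relation: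
φ(ε)=ε, φ(αUD)=φ(α)F, φ(αUUβDγD)=φ(α)φ(γ)Uφ(β)D. -/
inductive Phi : List Step → List Step → Prop
  | nil : Phi [] []
  | flat (α a : List Step) : DH α → Phi α a →
      Phi (α ++ [U, D]) (a ++ [F])
  | up (α β γ a b c : List Step) : DH α → DH β → DH γ →
      Phi α a → Phi β b → Phi γ c →
      Phi (α ++ [U, U] ++ β ++ [D] ++ γ ++ [D]) (a ++ c ++ U :: (b ++ [D]))

/-- Auxiliary: the list starts with one or more `F`'s followed by a `D`. -/
def fThenD : List Step → Bool
  | F :: D :: _ => true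
  | F :: rest => fThenD rest
  | _ => false

/-- Auxiliary: the list starts with one or more `F`'s followed by a `U`. -/
def fThenU : List Step → Bool
  | F :: U :: _ => true
  | F :: rest => fThenU rest
  | _ => false

/-- Number of occurrences of factors of the form `U F^k D` with `k ≥ 1` in `w`. -/
def countUFD (w : List Step) : ℕ :=
  w.tails.countP fun t => match t with
    | U :: rest => fThenD rest
    | _ => false

/-- Number of occurrences of factors of the form `U F^k U` with `k ≥ 1` in `w`. -/
def countUFU (w : List Step) : ℕ :=
  w.tails.countP fun t => match t with
    | U :: rest => fThenU rest
    | _ => false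

def cnt2 (s t : Step) : List Step → ℕ
  | a :: b :: l => (if a = s ∧ b = t then 1 else 0) + cnt2 s t (b :: l)
  | _ => 0

def bd (s t : Step) (x y : List Step) : ℕ :=
  if x.getLast? = some s ∧ y.head? = some t then 1 else 0

lemma countFactor_eq_cnt2 (s t : Step) : ∀ w, countFactor [s, t] w = cnt2 s t w
  | [] => by simp [countFactor, cnt2]
  | [a] => by simp [countFactor, cnt2, List.isPrefixOf]
  | a :: b :: l => by
    have := countFactor_eq_cnt2 s t (b :: l)
    simp [countFactor, cnt2, List.isPrefixOf] at this ⊢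
    rw [← this]
    by_cases h1 : a = s <;> by_cases h2 : b = t <;>
      simp [h1, h2, List.countP_cons, List.isPrefixOf] <;> first | omega | tauto

lemma cnt2_append (s t : Step) : ∀ x y, cnt2 s t (x ++ y) = cnt2 s t x + cnt2 s t y + bd s t x y
  | [], y => by simp [cnt2, bd]
  | [a], y => by
    cases y with
    | nil => simp [cnt2, bd]
    | cons b l => simp [cnt2, bd]; omega
  | a :: b :: l, y => by
    have := cnt2_append s t (b :: l) y
    simp only [List.cons_append, cnt2, bd, List.getLast?_cons_cons, List.append_eq] at this ⊢
    omega

lemma dh_getLast {w : List Step} (h : DH w) (hne : w ≠ []) : w.getLast? = some D := by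
  induction h with
  | nil => exact absurd rfl hne
  | cons α β hα hβ hht ihα ihβ =>
    rcases Classical.em (β = []) with hb | hb
    · subst hb
      have : U :: (α ++ [D] ++ []) = (U :: α) ++ [D] := by simp
      rw [this, List.getLast?_concat]
    · have h := ihβ hb
      have : U :: (α ++ [D] ++ β) = ((U :: α) ++ [D]) ++ β := by simp
      rw [this, List.getLast?_append, h]
      rfl

lemma dh_head {w : List Step} (h : DH w) (hne : w ≠ []) : w.head? = some U := by
  cases h with
  | nil => exact absurd rfl hne
  | cons α β hα hβ hht => rfl

lemma phi_nil_iff {P m : List Step} (h : Phi P m) : P = [] ↔ m = [] := by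
  cases h <;> simp

lemma phi_last {P m : List Step} (h : Phi P m) (hne : m ≠ []) :
    m.getLast? = some F ∨ m.getLast? = some D := by
  cases h with
  | nil => exact absurd rfl hne
  | flat α a _ _ => left; simp
  | up α β γ a b c _ _ _ _ _ _ =>
    right
    have : a ++ c ++ U :: (b ++ [D]) = (a ++ c ++ U :: b) ++ [D] := by simp
    rw [this, List.getLast?_concat]

lemma phi_head {P m : List Step} (h : Phi P m) (hne : m ≠ []) :
    m.head? = some F ∨ m.head? = some U := by
  induction h with
  | nil => exact absurd rfl hne
  | flat α a hα hphi ih =>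
    rcases Classical.em (a = []) with ha | ha
    · subst ha; left; simp
    · rcases ih ha with h | h
      · left; simp_all [List.head?_append]
      · right; simp_all [List.head?_append]
  | up α β γ a b c _ _ _ hpa hpb hpc iha ihb ihc =>
    rcases Classical.em (a = []) with ha | ha
    · subst ha
      rcases Classical.em (c = []) with hc | hc
      · subst hc; right; simp
      · rcases ihc hc with h | h
        · left; simp_all [List.head?_append]
        · right; simp_all [List.head?_append]
    · rcases iha ha with h | h
      · left; simp_all [List.head?_append]
      · right; simp_all [List.head?_append]

/-- φ transports DU: #DU(P) = #FF(φP) + #FU(φP) + #DF(φP) + #DU(φP). -/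
theorem stmt12 (n : ℕ) (P m : List Step) (hP : DH P) (hlen : P.length = 2 * n)
    (hphi : Phi P m) :
    countFactor [Step.D, Step.U] P =
      countFactor [Step.F, Step.F] m + countFactor [Step.F, Step.U] m +
        countFactor [Step.D, Step.F] m + countFactor [Step.D, Step.U] m := by
  clear hP hlen
  simp only [countFactor_eq_cnt2]
  induction hphi with
  | nil => simp [cnt2]
  | flat α a hα hphi ih =>
    have hiff := phi_nil_iff hphi
    rw [cnt2_append D U α [U, D], cnt2_append F F a [F], cnt2_append F U a [F],
      cnt2_append D F a [F], cnt2_append D U a [F]]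
    rcases Classical.em (a = []) with ha | ha
    · have hαe : α = [] := hiff.mpr ha
      simp [hαe, ha, cnt2, bd]
    · have hαne : α ≠ [] := fun h => ha (hiff.mp h)
      have hlast : α.getLast? = some D := dh_getLast hα hαne
      have hml := phi_last hphi ha
      rcases hml with h | h <;> simp [cnt2, bd, hlast, h, ih] <;> omega
  | up α β γ a b c hα hβ hγ hpa hpb hpc iha ihb ihc =>
    have hiffa := phi_nil_iff hpa
    have hiffc := phi_nil_iff hpc
    have hA : ∀ x : List Step, bd D U x [D] = 0 := fun x => by simp [bd]
    have hB : bd D U α [U, U] = (if α = [] then 0 else 1) := by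
      rcases Classical.em (α = []) with h | h
      · simp [bd, h]
      · simp [bd, h, dh_getLast hα h]
    have hC : bd D U (α ++ [U, U]) β = 0 := by simp [bd]
    have hD' : bd D U (α ++ [U, U] ++ β ++ [D]) γ = (if γ = [] then 0 else 1) := by
      have hx : (U :: (β ++ [D])).getLast? = some D := by
        rw [show U :: (β ++ [D]) = (U :: β) ++ [D] from rfl, List.getLast?_concat]
      rcases Classical.em (γ = []) with h | h
      · simp [bd, h]
      · simp [bd, h, dh_head hγ h, hx]
    have lhs_eq : cnt2 D U (α ++ [U, U] ++ β ++ [D] ++ γ ++ [D]) =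
        cnt2 D U α + cnt2 D U β + cnt2 D U γ
          + (if α = [] then 0 else 1) + (if γ = [] then 0 else 1) := by
      rw [cnt2_append D U (α ++ [U, U] ++ β ++ [D] ++ γ) [D],
        cnt2_append D U (α ++ [U, U] ++ β ++ [D]) γ,
        cnt2_append D U (α ++ [U, U] ++ β) [D],
        cnt2_append D U (α ++ [U, U]) β,
        cnt2_append D U α [U, U], hA, hA, hB, hC, hD']
      simp [cnt2]
      omega
    have rhs_eq : ∀ s t : Step, s ≠ U → t ≠ D → cnt2 s t (a ++ c ++ U :: (b ++ [D])) =
        cnt2 s t a + cnt2 s t b + cnt2 s t c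
          + bd s t (a ++ c) (U :: (b ++ [D])) + bd s t a c := by
      intro s t hs ht
      have h1 : a ++ c ++ U :: (b ++ [D]) = (a ++ c) ++ ([U] ++ (b ++ [D])) := by simp
      rw [h1, cnt2_append s t (a ++ c) ([U] ++ (b ++ [D])),
        cnt2_append s t [U] (b ++ [D]), cnt2_append s t b [D],
        cnt2_append s t a c]
      have hUs : (some U : Option Step) ≠ some s := by simpa using Ne.symm hs
      have hDt : (some D : Option Step) ≠ some t := by simpa using Ne.symm ht
      have h2 : bd s t [U] (b ++ [D]) = 0 := by simp [bd, hUs]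
      have h5 : bd s t b [D] = 0 := by simp [bd, hDt]
      have h4 : bd s t (a ++ c) ([U] ++ (b ++ [D])) = bd s t (a ++ c) (U :: (b ++ [D])) := rfl
      rw [h2, h4, h5]
      simp [cnt2]
      omega
    rw [lhs_eq, rhs_eq F F (by decide) (by decide), rhs_eq F U (by decide) (by decide),
      rhs_eq D F (by decide) (by decide), rhs_eq D U (by decide) (by decide), iha, ihb, ihc]
    rcases Classical.em (a = []) with ha | ha <;>
    rcases Classical.em (c = []) with hc | hc
    · simp [hiffa.mpr ha, hiffc.mpr hc, ha, hc, bd, cnt2] <;> omega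
    · have hαe := hiffa.mpr ha
      have hγne : γ ≠ [] := fun h => hc (hiffc.mp h)
      rcases phi_last hpc hc with h | h <;> rcases phi_head hpc hc with h3 | h3 <;>
        simp [hαe, hγne, ha, hc, bd, h, h3] <;> omega
    · have hγe := hiffc.mpr hc
      have hαne : α ≠ [] := fun h => ha (hiffa.mp h)
      rcases phi_last hpa ha with h | h <;>
        simp [hγe, hαne, ha, hc, bd, h] <;> omega
    · have hαne : α ≠ [] := fun h => ha (hiffa.mp h)
      have hγne : γ ≠ [] := fun h => hc (hiffc.mp h)
      rcases phi_last hpa ha with h1 | h1 <;>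
      rcases phi_last hpc hc with h2 | h2 <;>
      rcases phi_head hpc hc with h3 | h3 <;>
        simp [hαne, hγne, ha, hc, bd, h1, h2, h3] <;> omega
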